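/- Let a < b be coprime positive integers and let 0 ≤ i ≤ b − 1. The number of a,b-admissible diagonals of P_{b+1} with smaller endpoint i (i.e., of the form ij with j > i) equals a − 1 − ⌊ai/b⌋. -/
import Mathlib


/-- `S(a,b) = { ⌊ib/a⌋ : i = 1, …, a-1 }`. -/
def Sab (a b : ℕ) : Finset ℕ := (Finset.Icc 1 (a - 1)).image (fun i => i * b / a)

/-- A diagonal of the polygon `P_{b+1}` with boundary points `0, 1, …, b`:
a pair `i < j` with `j - i ≥ 2` and `(i, j) ≠ (0, b)`. -/
def IsDiagonal (b i j : ℕ) : Prop := i + 2 ≤ j ∧ j ≤ b ∧ ¬(i = 0 ∧ j = b)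

/-- A diagonal `ij` is `a,b`-admissible if it separates `j - i - 1` and `b - j + i`
boundary points, both of which lie in `S(a,b)`. -/
def Admissible (a b : ℕ) (d : ℕ × ℕ) : Prop :=
  IsDiagonal b d.1 d.2 ∧ d.2 - d.1 - 1 ∈ Sab a b ∧ b - d.2 + d.1 ∈ Sab a b

/-- Two diagonals `ij` and `km` cross if `i < k < j < m` or `k < i < m < j`. -/
def Crosses (d d' : ℕ × ℕ) : Prop :=
  (d.1 < d'.1 ∧ d'.1 < d.2 ∧ d.2 < d'.2) ∨ (d'.1 < d.1 ∧ d.1 < d'.2 ∧ d'.2 < d.2)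

/-- An `a,b`-Dyck path: a north/east lattice path from `(0,0)` to `(b,a)` staying weakly
above `y = (a/b) x`.  It is encoded by the height `h u` of its unique east step over the
column interval `[u, u+1]`, for `0 ≤ u < b`; we normalize `h u = a` for `u ≥ b`. -/
structure DyckPath (a b : ℕ) where
  h : ℕ → ℕ
  mono : Monotone h
  norm : ∀ x, b ≤ x → h x = a
  above : ∀ x, x < b → a * (x + 1) ≤ b * h x

/-- The lattice point `(x, y)` lies on `D` at the bottom of a north step of `D`. -/
def BottomNorth (a b : ℕ) (D : DyckPath a b) (x y : ℕ) : Prop :=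
  x ≤ b ∧ (if x = 0 then 0 else D.h (x - 1)) ≤ y ∧ y < D.h x

/-- The laser of slope `a/b` fired northeast from the lattice point `(x, y)` of `D` first
hits `D` in the interior of the east step whose right endpoint has `x`-coordinate `k`;
the associated laser diagonal is `d(P) = (x, k)`.  The laser passes strictly below the
right endpoint of every earlier east step and strictly above the one it hits. -/
def IsLaserDiag (a b : ℕ) (D : DyckPath a b) (x y k : ℕ) : Prop :=
  x < k ∧ k ≤ b ∧ b * D.h (k - 1) < b * y + a * (k - x) ∧
    ∀ u, x ≤ u → u + 1 < k → b * y + a * (u + 1 - x) < b * D.h u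

/-- `F(D)`: the set of laser diagonals `d(P)` of the lattice points `P ≠ (0,0)` at the
bottoms of north steps of `D`. -/
def FD (a b : ℕ) (D : DyckPath a b) : Set (ℕ × ℕ) :=
  { d | ∃ y, BottomNorth a b D d.1 y ∧ (d.1, y) ≠ (0, 0) ∧ IsLaserDiag a b D d.1 y d.2 }

/-- A finite abstract simplicial complex on the ground set `E`: a downward closed
collection of finite subsets of `E`. -/
structure AbsCplx (E : Type*) where
  faces : Set (Finset E)
  down : ∀ F ∈ faces, ∀ F' ⊆ F, F' ∈ faces

/-- The rational associahedron `Âss(a,b)`: faces are the sets of pairwise noncrossing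
`a,b`-admissible diagonals. -/
def hatAss (a b : ℕ) : AbsCplx (ℕ × ℕ) where
  faces := { F | (∀ d ∈ F, Admissible a b d) ∧ ∀ d ∈ F, ∀ d' ∈ F, ¬Crosses d d' }
  down := fun F hF F' hsub =>
    ⟨fun d hd => hF.1 d (hsub hd), fun d hd d' hd' => hF.2 d (hsub hd) d' (hsub hd')⟩

/-- The rational associahedron `Ass(a,b)`: faces are the subsets of the sets `F(D)`,
as `D` ranges over `a,b`-Dyck paths. -/
def Ass (a b : ℕ) : AbsCplx (ℕ × ℕ) where
  faces := { F | ∃ D : DyckPath a b, ∀ d ∈ F, d ∈ FD a b D }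
  down := fun F hF F' hsub =>
    let ⟨D, hD⟩ := hF
    ⟨D, fun d hd => hD d (hsub hd)⟩

lemma div_strict_mono_aux (a b : ℕ) (ha : 0 < a) (hab : a ≤ b) {k k' : ℕ}
    (h : k < k') : k * b / a < k' * b / a := by
  have h1 : k * b + a ≤ k' * b := by nlinarith
  have h2 : (k * b + a) / a ≤ k' * b / a := Nat.div_le_div_right h1
  rw [Nat.add_div_right _ ha] at h2
  omega

lemma compl_div (a b k : ℕ) (ha : 0 < a) (hab : a < b) (hcop : Nat.Coprime a b)
    (hk1 : 1 ≤ k) (hk2 : k ≤ a - 1) : (a - k) * b / a = b - 1 - k * b / a := by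
  have hka : k < a := by omega
  have hr : k * b % a ≠ 0 := by
    intro h
    have hdvd : a ∣ k * b := Nat.dvd_of_mod_eq_zero h
    have hdk : a ∣ k := (Nat.Coprime.dvd_of_dvd_mul_right hcop hdvd)
    have := Nat.le_of_dvd (by omega) hdk
    omega
  have hq := Nat.div_add_mod (k * b) a
  set q := k * b / a with hqdef
  set r := k * b % a with hrdef
  have hrlt : r < a := Nat.mod_lt _ ha
  have hqlt : q < b := by
    have h1 : k * b < a * b := by nlinarith
    exact Nat.div_lt_of_lt_mul h1
  have hkab : k * b ≤ a * b := by nlinarith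
  apply Nat.div_eq_of_lt_le
  · have h1 : (a - k) * b = a * b - k * b := by rw [Nat.sub_mul]
    zify [show k ≤ a from hka.le, show q ≤ b - 1 by omega, show 1 ≤ b by omega, hkab] at h1 hq ⊢
    nlinarith [h1, hq, hrlt]
  · have h1 : (a - k) * b = a * b - k * b := by rw [Nat.sub_mul]
    have hr1 : 1 ≤ r := by omega
    zify [show k ≤ a from hka.le, show q ≤ b - 1 by omega, show 1 ≤ b by omega, hkab] at h1 hq hr1 ⊢
    nlinarith [h1, hq, hr1]

lemma ai_div_lt (a b i : ℕ) (ha : 0 < a) (hb : 0 < b) (hi : i ≤ b - 1) :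
    a * i / b < a := by
  apply Nat.div_lt_of_lt_mul
  have h1 : i < b := by omega
  calc a * i < a * b := by nlinarith [h1]
  _ = b * a := Nat.mul_comm a b

lemma count_equiv (a b i k : ℕ) (ha : 0 < a) (hab : a < b) (hi : i ≤ b - 1)
    (hk1 : 1 ≤ k) (hk2 : k ≤ a - 1) :
    k * b / a ≤ b - 1 - i ↔ k ≤ a - 1 - a * i / b := by
  have hb : 0 < b := by omega
  have hm : a * i / b < a := ai_div_lt a b i ha hb hi
  have h1 : k * b / a ≤ b - 1 - i ↔ k * b < (b - i) * a := by
    constructor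
    · intro h
      have h' : k * b / a < b - i := by omega
      exact (Nat.div_lt_iff_lt_mul ha).mp h'
    · intro h
      have h' : k * b / a < b - i := (Nat.div_lt_iff_lt_mul ha).mpr h
      omega
  obtain ⟨m, hmdef⟩ : ∃ m, a * i / b = m := ⟨_, rfl⟩
  rw [hmdef] at hm ⊢
  have h2 : k ≤ a - 1 - m ↔ m < a - k := by omega
  have h3 : m < a - k ↔ a * i < (a - k) * b := by
    rw [← hmdef]; exact Nat.div_lt_iff_lt_mul hb
  rw [h1, h2, h3]
  zify [show i ≤ b by omega, show k ≤ a by omega]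
  constructor <;> intro h <;> nlinarith [h]

/-- The number of `a,b`-admissible diagonals with smaller endpoint `i` is
`a - 1 - ⌊a i / b⌋`. -/
theorem card_admissible_with_smaller_endpoint (a b i : ℕ) (ha : 0 < a) (hab : a < b)
    (hcop : Nat.Coprime a b) (hi : i ≤ b - 1) :
    {j : ℕ | Admissible a b (i, j)}.ncard = a - 1 - a * i / b := by
  classical
  have hb : 0 < b := by omega
  have hm : a * i / b < a := ai_div_lt a b i ha hb hi
  have hset : {j : ℕ | Admissible a b (i, j)} =
      ↑((Finset.Icc 1 (a - 1 - a * i / b)).image (fun k => i + 1 + k * b / a)) := by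
    ext j
    simp only [Set.mem_setOf_eq, Finset.coe_image, Set.mem_image, Finset.mem_coe,
      Finset.mem_Icc, Admissible, IsDiagonal, Sab, Finset.mem_image]
    constructor
    · rintro ⟨⟨h2i, hjb, hne⟩, ⟨k, hk, heq⟩, -⟩
      refine ⟨k, ⟨hk.1, ?_⟩, ?_⟩
      · have hle : k * b / a ≤ b - 1 - i := by omega
        exact (count_equiv a b i k ha hab hi hk.1 hk.2).mp hle
      · omega
    · rintro ⟨k, ⟨hk1, hk2⟩, rfl⟩
      have hk2' : k ≤ a - 1 := hk2.trans (Nat.sub_le _ _)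
      have hle : k * b / a ≤ b - 1 - i :=
        (count_equiv a b i k ha hab hi hk1 hk2').mpr hk2
      have hpos : 1 ≤ k * b / a := by
        rw [Nat.one_le_div_iff ha]; nlinarith
      have hcompl := compl_div a b k ha hab hcop hk1 hk2'
      have hcpos : 1 ≤ (a - k) * b / a := by
        rw [Nat.one_le_div_iff ha]
        have h1 : 1 ≤ a - k := by omega
        nlinarith
      refine ⟨⟨?_, ?_, ?_⟩, ⟨k, ⟨hk1, hk2'⟩, ?_⟩, ⟨a - k, ⟨?_, ?_⟩, ?_⟩⟩ <;> omega
  rw [hset, Set.ncard_coe_finset, Finset.card_image_of_injOn, Nat.card_Icc]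
  · omega
  · intro x hx y hy hxy
    simp only [Finset.coe_Icc, Set.mem_Icc] at hx hy
    simp only at hxy
    rcases lt_trichotomy x y with h | h | h
    · have := div_strict_mono_aux a b ha hab.le h; omega
    · exact h
    · have := div_strict_mono_aux a b ha hab.le h; omega
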